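/- arXiv:1812.00958 — 2 statements merged into one kernel-verified Lean document; each statement's English description precedes it below -/
import Mathlib

section
/- Let (X,d) be a metric space, let (x_n)_{n≥1} and (y_n)_{n≥1} be sequences in X both converging to a point x* ∈ X. Then there exist sequences (a_n) and (b_n) of positive real numbers converging to 0 such that d(x_n, x*) ≤ a_n and d(y_n, x*) ≤ b_n for all n, and a_n / b_n → 0 as n → ∞. (That is, (x_n) converges faster than (y_n) to x* in the sense of Berinde's Definition 2.7.) -/
open Filter Topology

/-- Berinde's Definition 2.7 (metric space version): any sequence `(x n)` converges
"faster" than any sequence `(y n)` to their common limit `x*`. -/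
theorem berinde_faster {X : Type*} [MetricSpace X] (x y : ℕ → X) (xstar : X)
    (hx : Tendsto x atTop (𝓝 xstar)) (hy : Tendsto y atTop (𝓝 xstar)) :
    ∃ a b : ℕ → ℝ, (∀ n, 0 < a n) ∧ (∀ n, 0 < b n) ∧
      Tendsto a atTop (𝓝 0) ∧ Tendsto b atTop (𝓝 0) ∧
      (∀ n, dist (x n) xstar ≤ a n) ∧ (∀ n, dist (y n) xstar ≤ b n) ∧
      Tendsto (fun n => a n / b n) atTop (𝓝 0) := by
  set a : ℕ → ℝ := fun n => dist (x n) xstar + (1/2 : ℝ) ^ n with ha_def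
  set b : ℕ → ℝ := fun n => max (Real.sqrt (a n)) (dist (y n) xstar + (1/2 : ℝ) ^ n)
    with hb_def
  have hpow : Tendsto (fun n : ℕ => (1/2 : ℝ) ^ n) atTop (𝓝 0) := by
    apply tendsto_pow_atTop_nhds_zero_of_lt_one <;> norm_num
  have hcx : Tendsto (fun n => dist (x n) xstar) atTop (𝓝 0) :=
    tendsto_iff_dist_tendsto_zero.mp hx
  have hcy : Tendsto (fun n => dist (y n) xstar) atTop (𝓝 0) :=
    tendsto_iff_dist_tendsto_zero.mp hy
  have hapos : ∀ n, 0 < a n := fun n =>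
    add_pos_of_nonneg_of_pos dist_nonneg (by positivity)
  have ha0 : Tendsto a atTop (𝓝 0) := by
    simpa only [add_zero] using hcx.add hpow
  have hsqrt : Tendsto (fun n => Real.sqrt (a n)) atTop (𝓝 0) := by
    have := (Real.continuous_sqrt.tendsto 0).comp ha0
    simpa [Function.comp_def] using this
  have hbpos : ∀ n, 0 < b n := fun n =>
    lt_of_lt_of_le (Real.sqrt_pos.mpr (hapos n)) (le_max_left _ _)
  have hb0 : Tendsto b atTop (𝓝 0) := by
    have h2 : Tendsto (fun n => dist (y n) xstar + (1/2:ℝ)^n) atTop (𝓝 0) := by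
      simpa only [add_zero] using hcy.add hpow
    simpa only [max_self] using hsqrt.max h2
  refine ⟨a, b, hapos, hbpos, ha0, hb0, ?_, ?_, ?_⟩
  · intro n; exact le_add_of_nonneg_right (by positivity)
  · intro n
    exact le_trans (le_add_of_nonneg_right (by positivity)) (le_max_right _ _)
  · have hupper : ∀ n, a n / b n ≤ Real.sqrt (a n) := by
      intro n
      have h1 : a n / b n ≤ a n / Real.sqrt (a n) :=
        div_le_div_of_nonneg_left (hapos n).le (Real.sqrt_pos.mpr (hapos n))
          (le_max_left _ _)
      calc a n / b n ≤ a n / Real.sqrt (a n) := h1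
        _ = Real.sqrt (a n) := Real.div_sqrt
    have hlower : ∀ n, (0:ℝ) ≤ a n / b n := fun n =>
      div_nonneg (hapos n).le (hbpos n).le
    exact squeeze_zero hlower hupper hsqrt
end

section
/- Let (X,d) be a metric space and let (x_n)_{n≥1}, (y_n)_{n≥1} be sequences in X both converging to x* ∈ X. Then simultaneously: (i) there exist positive sequences (a_n), (b_n) converging to 0 with d(x_n,x*) ≤ a_n, d(y_n,x*) ≤ b_n for all n and a_n/b_n → 0; and (ii) there exist positive sequences (a'_n), (b'_n) converging to 0 with d(y_n,x*) ≤ a'_n, d(x_n,x*) ≤ b'_n for all n and a'_n/b'_n → 0. Hence each of (x_n) and (y_n) converges faster than the other in the sense of Berinde's Definition 2.7, so the relation 'converges faster' in that sense holds symmetrically between any two sequences with the same limit. -/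
open Filter Topology


lemma berinde_exists {X : Type*} [MetricSpace X] (u v : ℕ → X) (xstar : X)
    (hu : Tendsto u atTop (𝓝 xstar)) (hv : Tendsto v atTop (𝓝 xstar)) :
    ∃ a b : ℕ → ℝ, (∀ n, 0 < a n) ∧ (∀ n, 0 < b n) ∧
      Tendsto a atTop (𝓝 0) ∧ Tendsto b atTop (𝓝 0) ∧
      (∀ n, dist (u n) xstar ≤ a n) ∧ (∀ n, dist (v n) xstar ≤ b n) ∧
      Tendsto (fun n => a n / b n) atTop (𝓝 0) := by
  set c : ℕ → ℝ := fun n => max (dist (u n) xstar) (dist (v n) xstar) + (1/2)^n with hc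
  have hcpos : ∀ n, 0 < c n := fun n =>
    add_pos_of_nonneg_of_pos (le_max_iff.2 (Or.inl dist_nonneg)) (by positivity)
  have hc0 : Tendsto c atTop (𝓝 0) := by
    have h1 : Tendsto (fun n => dist (u n) xstar) atTop (𝓝 0) :=
      (tendsto_iff_dist_tendsto_zero).1 hu
    have h2 : Tendsto (fun n => dist (v n) xstar) atTop (𝓝 0) :=
      (tendsto_iff_dist_tendsto_zero).1 hv
    have h3 : Tendsto (fun n : ℕ => ((1:ℝ)/2)^n) atTop (𝓝 0) :=
      tendsto_pow_atTop_nhds_zero_of_lt_one (by norm_num) (by norm_num)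
    have h4 := (h1.max h2).add h3
    simp only [max_self, add_zero] at h4
    exact h4
  have hsq : Tendsto (fun n => Real.sqrt (c n)) atTop (𝓝 0) := by
    simpa [Function.comp_def] using (Real.continuous_sqrt.continuousAt.tendsto.comp hc0)
  refine ⟨c, fun n => c n + Real.sqrt (c n), hcpos,
    fun n => add_pos (hcpos n) (Real.sqrt_pos.2 (hcpos n)), hc0, ?_, ?_, ?_, ?_⟩
  · simpa using hc0.add hsq
  · exact fun n => le_add_of_le_of_nonneg (le_max_left _ _) (by positivity)
  · exact fun n => le_trans (le_trans (le_max_right _ _) (le_add_of_nonneg_right (by positivity)))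
      (le_add_of_nonneg_right (Real.sqrt_nonneg _))
  · apply squeeze_zero (fun n => by positivity) (fun n => ?_) hsq
    have hb : 0 < c n + Real.sqrt (c n) := add_pos (hcpos n) (Real.sqrt_pos.2 (hcpos n))
    rw [div_le_iff₀ hb]
    have h1 : Real.sqrt (c n) * Real.sqrt (c n) = c n := Real.mul_self_sqrt (hcpos n).le
    nlinarith [Real.sqrt_nonneg (c n), (hcpos n).le]

/-- Each of two sequences with the same limit converges "faster" than the other in
the sense of Berinde's Definition 2.7: the relation holds symmetrically. -/
theorem berinde_faster_symmetric {X : Type*} [MetricSpace X] (x y : ℕ → X) (xstar : X)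
    (hx : Tendsto x atTop (𝓝 xstar)) (hy : Tendsto y atTop (𝓝 xstar)) :
    (∃ a b : ℕ → ℝ, (∀ n, 0 < a n) ∧ (∀ n, 0 < b n) ∧
      Tendsto a atTop (𝓝 0) ∧ Tendsto b atTop (𝓝 0) ∧
      (∀ n, dist (x n) xstar ≤ a n) ∧ (∀ n, dist (y n) xstar ≤ b n) ∧
      Tendsto (fun n => a n / b n) atTop (𝓝 0)) ∧
    (∃ a' b' : ℕ → ℝ, (∀ n, 0 < a' n) ∧ (∀ n, 0 < b' n) ∧
      Tendsto a' atTop (𝓝 0) ∧ Tendsto b' atTop (𝓝 0) ∧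
      (∀ n, dist (y n) xstar ≤ a' n) ∧ (∀ n, dist (x n) xstar ≤ b' n) ∧
      Tendsto (fun n => a' n / b' n) atTop (𝓝 0)) :=
  ⟨berinde_exists x y xstar hx hy, berinde_exists y x xstar hy hx⟩
end
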